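/- The function σ ↦ ζ(2σ)/ζ(σ) is strictly monotone increasing on the interval (1, ∞), and its range on this interval is the open interval (0, 1). -/

import Mathlib

open Complex Set Filter Topology

namespace ZetaRatioAux

noncomputable def Z (σ : ℝ) : ℝ := ∑' n : ℕ, (n : ℝ) ^ (-σ)

noncomputable def sf (σ : ℝ) (n : ℕ) : ℝ := if Squarefree n then (n : ℝ) ^ (-σ) else 0

noncomputable def S (σ : ℝ) : ℝ := ∑' n : ℕ, sf σ n

lemma summable_rpow {σ : ℝ} (hσ : 1 < σ) : Summable (fun n : ℕ => (n : ℝ) ^ (-σ)) :=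
  Real.summable_nat_rpow.mpr (by linarith)

lemma sf_nonneg (σ : ℝ) (n : ℕ) : 0 ≤ sf σ n := by
  unfold sf; split
  · positivity
  · exact le_rfl

lemma sf_le (σ : ℝ) (n : ℕ) : sf σ n ≤ (n : ℝ) ^ (-σ) := by
  unfold sf; split
  · exact le_rfl
  · positivity

lemma summable_sf {σ : ℝ} (hσ : 1 < σ) : Summable (sf σ) :=
  Summable.of_nonneg_of_le (sf_nonneg σ) (sf_le σ) (summable_rpow hσ)

noncomputable def F (σ : ℝ) (hσ : 1 < σ) : ℕ →*₀ ℝ where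
  toFun n := (n : ℝ) ^ (-σ)
  map_zero' := by
    simp only [Nat.cast_zero]
    exact Real.zero_rpow (by linarith)
  map_one' := by simp
  map_mul' m n := by
    push_cast
    exact Real.mul_rpow (Nat.cast_nonneg m) (Nat.cast_nonneg n)

lemma hasProd_Z {σ : ℝ} (hσ : 1 < σ) :
    HasProd (fun p : Nat.Primes => (1 - (p : ℝ) ^ (-σ))⁻¹) (Z σ) := by
  have := EulerProduct.eulerProduct_completely_multiplicative_hasProd
    (f := F σ hσ) (by simpa [F, Real.norm_eq_abs, abs_of_nonneg,
      Real.rpow_natCast] using (summable_rpow hσ).abs)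
  exact this

lemma sf_one (σ : ℝ) : sf σ 1 = 1 := by simp [sf, squarefree_one]

lemma sf_mul (σ : ℝ) {m n : ℕ} (h : m.Coprime n) : sf σ (m * n) = sf σ m * sf σ n := by
  unfold sf
  simp only [Nat.squarefree_mul h]
  by_cases hm : Squarefree m <;> by_cases hn : Squarefree n <;>
    simp [hm, hn, Nat.cast_mul, Real.mul_rpow (Nat.cast_nonneg m) (Nat.cast_nonneg n)]

lemma local_factor {σ : ℝ} {p : ℕ} (hp : p.Prime) :
    ∑' e : ℕ, sf σ (p ^ e) = 1 + (p : ℝ) ^ (-σ) := by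
  rw [tsum_eq_sum (s := {0, 1}) (by
    intro e he
    simp only [Finset.mem_insert, Finset.mem_singleton] at he
    push_neg at he
    have he0 : e ≠ 0 := he.1
    have : ¬ Squarefree (p ^ e) := by
      rw [Nat.squarefree_pow_iff hp.ne_one he0]
      rintro ⟨-, rfl⟩
      exact he.2 rfl
    simp [sf, this])]
  rw [Finset.sum_insert (by simp), Finset.sum_singleton]
  simp [sf, squarefree_one, hp.squarefree]

lemma hasProd_S {σ : ℝ} (hσ : 1 < σ) :
    HasProd (fun p : Nat.Primes => 1 + (p : ℝ) ^ (-σ)) (S σ) := by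
  have hsum : Summable (fun n => ‖sf σ n‖) := by
    simpa [Real.norm_eq_abs, _root_.abs_of_nonneg (sf_nonneg σ _)] using summable_sf hσ
  have h := EulerProduct.eulerProduct_hasProd (f := sf σ) (sf_one σ)
    (fun {m n} h => sf_mul σ h) hsum (by simp [sf, not_squarefree_zero])
  refine HasProd.congr_fun h fun p => ?_
  exact (local_factor p.prop).symm

lemma key {σ : ℝ} (hσ : 1 < σ) : Z σ = Z (2 * σ) * S σ := by
  have h2σ : 1 < 2 * σ := by linarith
  have h := (hasProd_Z h2σ).mul (hasProd_S hσ)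
  have h' : HasProd (fun p : Nat.Primes => (1 - (p : ℝ) ^ (-σ))⁻¹) (Z (2 * σ) * S σ) := by
    refine HasProd.congr_fun h fun p => ?_
    have hp1 : (1 : ℝ) < (p : ℕ) := by exact_mod_cast p.prop.one_lt
    set x := ((p : ℕ) : ℝ) ^ (-σ) with hx
    have hx0 : 0 < x := Real.rpow_pos_of_pos (by linarith) _
    have hx1 : x < 1 := Real.rpow_lt_one_of_one_lt_of_neg hp1 (by linarith)
    have h2 : ((p : ℕ) : ℝ) ^ (-(2 * σ)) = x * x := by
      rw [hx, ← Real.rpow_add (by linarith : (0:ℝ) < (p:ℕ))]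
      ring_nf
    rw [h2]
    rw [show (1 : ℝ) - x * x = (1 - x) * (1 + x) by ring, mul_inv]
    rw [mul_assoc, inv_mul_cancel₀ (by linarith)]
    ring
  exact (hasProd_Z hσ).unique h'

lemma zeta_link {σ : ℝ} (hσ : 1 < σ) : riemannZeta σ = (Z σ : ℂ) := by
  rw [zeta_eq_tsum_one_div_nat_cpow (by simpa using hσ)]
  rw [Z, Complex.ofReal_tsum]
  congr 1
  funext n
  rcases Nat.eq_zero_or_pos n with rfl | hn
  · simp only [Nat.cast_zero]
    rw [Real.zero_rpow (by linarith), Complex.zero_cpow (by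
      simpa using (by linarith : σ ≠ 0)), Complex.ofReal_zero]
    simp
  · rw [Real.rpow_neg (Nat.cast_nonneg n), Complex.ofReal_inv,
      Complex.ofReal_cpow (Nat.cast_nonneg n)]
    push_cast
    rw [one_div]

lemma Z_pos {σ : ℝ} (hσ : 1 < σ) : 1 ≤ Z σ := by
  have := Summable.le_tsum (summable_rpow hσ) 1 (fun j _ => by positivity)
  simpa [Z] using this

lemma S_gt_one {σ : ℝ} (hσ : 1 < σ) : 1 + (2:ℝ) ^ (-σ) ≤ S σ := by
  have h := Summable.sum_le_tsum ({1, 2} : Finset ℕ) (fun n _ => sf_nonneg σ n) (summable_sf hσ)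
  rw [Finset.sum_insert (by simp), Finset.sum_singleton] at h
  simpa [S, sf, squarefree_one, Nat.squarefree_two] using h

lemma re_eq {σ : ℝ} (hσ : 1 < σ) :
    (riemannZeta (2 * σ) / riemannZeta σ).re = (S σ)⁻¹ := by
  have h2 : 1 < 2 * σ := by linarith
  have hz2 : riemannZeta (2 * (σ : ℂ)) = ((Z (2 * σ) : ℝ) : ℂ) := by
    rw [show (2 * (σ : ℂ)) = ((2 * σ : ℝ) : ℂ) by push_cast; ring]
    exact zeta_link h2
  rw [hz2, zeta_link hσ, ← Complex.ofReal_div, Complex.ofReal_re]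
  rw [key hσ]
  have hZ2 : (0:ℝ) < Z (2 * σ) := lt_of_lt_of_le one_pos (Z_pos h2)
  have hS0 : S σ ≠ 0 := by
    have := S_gt_one hσ
    have h2p : (0:ℝ) < (2:ℝ) ^ (-σ) := by positivity
    intro h; rw [h] at this; linarith
  field_simp

lemma S_anti {a b : ℝ} (ha : 1 < a) (hab : a < b) : S b < S a := by
  have hle : ∀ n, sf b n ≤ sf a n := by
    intro n
    unfold sf
    split
    · rcases Nat.eq_zero_or_pos n with rfl | hn
      · exact absurd ‹Squarefree 0› not_squarefree_zero
      rcases Nat.lt_or_ge n 2 with h1 | h2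
      · interval_cases n <;> simp
      · exact Real.rpow_le_rpow_of_exponent_le (by exact_mod_cast h2.trans' (by norm_num))
          (by linarith)
    · exact le_rfl
  refine Summable.tsum_lt_tsum (i := 2) hle ?_ (summable_sf (by linarith)) (summable_sf ha)
  simp only [sf, Nat.squarefree_two, if_true]
  exact Real.rpow_lt_rpow_of_exponent_lt (by norm_num) (by linarith)

lemma S_le_bound {σ : ℝ} (hσ : 2 ≤ σ) :
    S σ ≤ 1 + (2:ℝ) ^ (2 - σ) * Z 2 := by
  have h1σ : 1 < σ := by linarith
  have hsum2 : Summable (fun n : ℕ => (n : ℝ) ^ (-(2:ℝ))) := summable_rpow one_lt_two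
  have hsum2' : Summable (fun n : ℕ => (2:ℝ) ^ (2 - σ) * (n : ℝ) ^ (-(2:ℝ))) :=
    hsum2.mul_left _
  have hS : S σ = sf σ 1 + ∑' n, if n = 1 then 0 else sf σ n := by
    exact Summable.tsum_eq_add_tsum_ite (summable_sf h1σ) 1
  rw [hS, sf_one]
  gcongr
  have hb : ∀ n : ℕ, (if n = 1 then 0 else sf σ n) ≤ (2:ℝ) ^ (2 - σ) * (n : ℝ) ^ (-(2:ℝ)) := by
    intro n
    split
    · positivity
    rcases Nat.eq_zero_or_pos n with rfl | hn
    · simp only [sf, not_squarefree_zero, if_false]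
      positivity
    have hn2 : 2 ≤ n := by omega
    have hn2' : (2:ℝ) ≤ (n : ℝ) := by exact_mod_cast hn2
    calc sf σ n ≤ (n : ℝ) ^ (-σ) := sf_le σ n
      _ = (n : ℝ) ^ (2 - σ) * (n : ℝ) ^ (-(2:ℝ)) := by
          rw [← Real.rpow_add (by linarith)]; ring_nf
      _ ≤ (2:ℝ) ^ (2 - σ) * (n : ℝ) ^ (-(2:ℝ)) :=
          mul_le_mul_of_nonneg_right
            (Real.rpow_le_rpow_of_nonpos two_pos hn2' (by linarith)) (by positivity)
  calc (∑' n, if n = 1 then 0 else sf σ n) ≤ ∑' n : ℕ, (2:ℝ) ^ (2 - σ) * (n : ℝ) ^ (-(2:ℝ)) := by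
        refine Summable.tsum_le_tsum hb ?_ hsum2'
        refine Summable.of_nonneg_of_le (fun n => ?_) hb hsum2'
        split
        · exact le_rfl
        · exact sf_nonneg σ n
    _ = (2:ℝ) ^ (2 - σ) * Z 2 := by rw [tsum_mul_left]; rfl

lemma S_tendsto_atTop : Tendsto S atTop (𝓝 1) := by
  have h2 : Tendsto (fun σ : ℝ => (2:ℝ) ^ (2 - σ)) atTop (𝓝 0) := by
    have hlog : Tendsto (fun σ : ℝ => Real.log 2 * (2 - σ)) atTop atBot := by
      apply Tendsto.const_mul_atBot (by positivity : (0:ℝ) < Real.log 2)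
      exact tendsto_atBot_add_const_left _ _ tendsto_neg_atTop_atBot
    have := Real.tendsto_exp_atBot.comp hlog
    refine this.congr fun σ => ?_
    rw [Function.comp_apply, ← Real.rpow_def_of_pos two_pos]
  have hupper : Tendsto (fun σ : ℝ => 1 + (2:ℝ) ^ (2 - σ) * Z 2) atTop (𝓝 1) := by
    have := (h2.mul_const (Z 2)).const_add 1
    simpa using this
  refine tendsto_of_tendsto_of_tendsto_of_le_of_le' tendsto_const_nhds hupper ?_ ?_
  · filter_upwards [eventually_gt_atTop (1:ℝ)] with σ hσ
    have := S_gt_one hσ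
    have : (0:ℝ) < (2:ℝ) ^ (-σ) := by positivity
    linarith [S_gt_one hσ]
  · filter_upwards [eventually_ge_atTop (2:ℝ)] with σ hσ
    exact S_le_bound hσ

lemma tendsto_ratio_one :
    Tendsto (fun σ : ℝ => (riemannZeta (2 * σ) / riemannZeta σ).re) (𝓝[>] (1:ℝ)) (𝓝 0) := by
  have hcoe : Tendsto (fun σ : ℝ => (σ : ℂ)) (𝓝[>] (1:ℝ)) (𝓝[≠] (1:ℂ)) := by
    rw [tendsto_nhdsWithin_iff]
    constructor
    · exact (Complex.continuous_ofReal.tendsto 1).mono_left nhdsWithin_le_nhds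
    · filter_upwards [self_mem_nhdsWithin] with σ (hσ : 1 < σ)
      intro h
      rw [Set.mem_singleton_iff] at h
      have : σ = 1 := by exact_mod_cast h
      simp [this] at hσ
  have hA : Tendsto (fun σ : ℝ => ((σ:ℂ) - 1) * riemannZeta σ) (𝓝[>] (1:ℝ)) (𝓝 1) :=
    riemannZeta_residue_one.comp hcoe
  have hB : Tendsto (fun σ : ℝ => riemannZeta (2 * σ)) (𝓝[>] (1:ℝ)) (𝓝 (riemannZeta 2)) := by
    have hζ : ContinuousAt riemannZeta 2 :=
      (differentiableAt_riemannZeta (by norm_num)).continuousAt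
    have hm : Tendsto (fun σ : ℝ => (2 * σ : ℂ)) (𝓝[>] (1:ℝ)) (𝓝 (2:ℂ)) := by
      have : Tendsto (fun σ : ℝ => (2 * σ : ℂ)) (𝓝 (1:ℝ)) (𝓝 (2:ℂ)) := by
        have := (Complex.continuous_ofReal.tendsto 1).const_mul (2:ℂ)
        simpa using this
      exact this.mono_left nhdsWithin_le_nhds
    exact hζ.tendsto.comp hm
  have hC : Tendsto (fun σ : ℝ => ((σ:ℂ) - 1)) (𝓝[>] (1:ℝ)) (𝓝 0) := by
    have : Tendsto (fun σ : ℝ => ((σ:ℂ) - 1)) (𝓝 (1:ℝ)) (𝓝 0) := by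
      have := (Complex.continuous_ofReal.tendsto 1).sub_const (1:ℂ)
      simpa using this
    exact this.mono_left nhdsWithin_le_nhds
  have hnum : Tendsto (fun σ : ℝ => riemannZeta (2 * σ) * ((σ:ℂ) - 1)) (𝓝[>] (1:ℝ)) (𝓝 0) := by
    simpa using hB.mul hC
  have hdiv : Tendsto (fun σ : ℝ =>
      (riemannZeta (2 * σ) * ((σ:ℂ) - 1)) / (((σ:ℂ) - 1) * riemannZeta σ))
      (𝓝[>] (1:ℝ)) (𝓝 0) := by
    simpa [Pi.div_def] using hnum.div hA one_ne_zero
  have hcongr : Tendsto (fun σ : ℝ => riemannZeta (2 * σ) / riemannZeta σ) (𝓝[>] (1:ℝ)) (𝓝 0) := by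
    refine hdiv.congr' ?_
    filter_upwards [self_mem_nhdsWithin] with σ (hσ : 1 < σ)
    have h1 : ((σ:ℂ) - 1) ≠ 0 := by
      intro h
      have : (σ:ℂ) = 1 := by linear_combination h
      have : σ = 1 := by exact_mod_cast this
      simp [this] at hσ
    rw [mul_comm ((σ:ℂ) - 1) (riemannZeta σ), mul_div_mul_right _ _ h1]
  have := (Complex.continuous_re.tendsto 0).comp hcongr
  simpa [Function.comp_def] using this

lemma S_pos {σ : ℝ} (hσ : 1 < σ) : 1 < S σ := by
  have h2 : (0:ℝ) < (2:ℝ) ^ (-σ) := by positivity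
  linarith [S_gt_one hσ]

lemma contAt {σ : ℝ} (hσ : 1 < σ) :
    ContinuousAt (fun σ : ℝ => (riemannZeta (2 * σ) / riemannZeta σ).re) σ := by
  have hmap : ContinuousAt (fun σ : ℝ => (2 * σ : ℂ)) σ := by fun_prop
  have hmap1 : ContinuousAt (fun σ : ℝ => (σ : ℂ)) σ := by fun_prop
  have h2σ : (2 * (σ:ℂ)) ≠ 1 := by
    intro h
    have : (2 * σ : ℝ) = 1 := by exact_mod_cast h
    linarith
  have hσ1 : (σ:ℂ) ≠ 1 := by
    intro h
    have : σ = 1 := by exact_mod_cast h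
    linarith
  have hA : ContinuousAt (fun σ : ℝ => riemannZeta (2 * σ)) σ := by
    have := ContinuousAt.comp (g := riemannZeta) (f := fun σ : ℝ => (2 * σ : ℂ))
      ((differentiableAt_riemannZeta h2σ).continuousAt) hmap
    simpa [Function.comp_def] using this
  have hB : ContinuousAt (fun σ : ℝ => riemannZeta σ) σ := by
    have := ContinuousAt.comp (g := riemannZeta) (f := fun σ : ℝ => (σ : ℂ))
      ((differentiableAt_riemannZeta hσ1).continuousAt) hmap1
    simpa [Function.comp_def] using this
  have hne : riemannZeta σ ≠ 0 := riemannZeta_ne_zero_of_one_lt_re (by simpa using hσ)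
  have := ContinuousAt.comp (g := Complex.re)
    (f := fun σ : ℝ => riemannZeta (2 * σ) / riemannZeta σ)
    Complex.continuous_re.continuousAt (hA.div hB hne)
  simpa [Function.comp_def] using this

end ZetaRatioAux

open ZetaRatioAux in
/-- `σ ↦ ζ(2σ)/ζ(σ)` is strictly increasing on `(1, ∞)` and its range there is `(0, 1)`. -/
theorem zeta_ratio_strictMonoOn_and_range :
    StrictMonoOn (fun σ : ℝ => (riemannZeta (2 * σ) / riemannZeta σ).re) (Ioi 1) ∧
      (fun σ : ℝ => (riemannZeta (2 * σ) / riemannZeta σ).re) '' (Ioi 1) = Ioo 0 1 := by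
  set f := fun σ : ℝ => (riemannZeta (2 * σ) / riemannZeta σ).re with hf
  have hmono : StrictMonoOn f (Ioi 1) := by
    intro a ha b hb hab
    rw [hf]
    simp only
    rw [re_eq ha, re_eq hb]
    have hSb : (1:ℝ) < S b := S_pos hb
    have := S_anti ha hab
    rw [inv_lt_inv₀ (by linarith) (by linarith)]
    exact this
  refine ⟨hmono, ?_⟩
  have hftop : Tendsto f atTop (𝓝 1) := by
    have hinv : Tendsto (fun σ => (S σ)⁻¹) atTop (𝓝 1) := by
      simpa using (S_tendsto_atTop.inv₀ one_ne_zero)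
    refine hinv.congr' ?_
    filter_upwards [Filter.eventually_gt_atTop (1:ℝ)] with σ hσ
    exact (re_eq hσ).symm
  ext y
  constructor
  · rintro ⟨σ, hσ, rfl⟩
    have hσ' : 1 < σ := hσ
    have hS := S_pos hσ'
    rw [hf]
    simp only
    rw [re_eq hσ']
    constructor
    · positivity
    · exact inv_lt_one_of_one_lt₀ hS
  · rintro ⟨hy0, hy1⟩
    obtain ⟨a, haf, ha1⟩ : ∃ a, f a < y ∧ 1 < a := by
      have hev : ∀ᶠ σ in 𝓝[>] (1:ℝ), f σ < y := tendsto_ratio_one.eventually_lt_const hy0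
      obtain ⟨a, h1, h2⟩ := (hev.and self_mem_nhdsWithin).exists
      exact ⟨a, h1, h2⟩
    obtain ⟨b, hbf, hab⟩ : ∃ b, y < f b ∧ a < b := by
      have hev : ∀ᶠ σ in Filter.atTop, y < f σ := hftop.eventually_const_lt hy1
      obtain ⟨b, h1, h2⟩ := (hev.and (Filter.eventually_gt_atTop a)).exists
      exact ⟨b, h1, h2⟩
    have hcont : ContinuousOn f (Icc a b) := by
      intro σ hσ
      exact (contAt (lt_of_lt_of_le ha1 hσ.1)).continuousWithinAt
    have hy : y ∈ Ioo (f a) (f b) := ⟨haf, hbf⟩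
    obtain ⟨σ, hσ, hσy⟩ := intermediate_value_Ioo (le_of_lt hab) hcont hy
    exact ⟨σ, lt_trans ha1 hσ.1, hσy⟩
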